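/- Let (X,r) be a finite nondegenerate involutive quadratic set with |X| = n such that r is 2-cancellative. Then for every x ∈ X there exists a unique y ∈ X with r(x,y) = (x,y); consequently the set F(X,r) = {(x,y) ∈ X² : r(x,y) = (x,y)} of r-fixed points has cardinality exactly n. -/
import Mathlib


/-- In a finite nondegenerate involutive 2-cancellative quadratic set of order `n`,
for every `x` there is a unique `y` with `r (x, y) = (x, y)`, and the set of
`r`-fixed points has cardinality exactly `n`. -/
theorem stmt_3 {X : Type*} [Fintype X] (n : ℕ) (hn : Fintype.card X = n)
    (r : X × X → X × X)
    (hbij : Function.Bijective r)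
    (hndl : ∀ x : X, Function.Bijective fun y => (r (x, y)).1)
    (hndr : ∀ y : X, Function.Bijective fun x => (r (x, y)).2)
    (hinv : Function.Involutive r)
    (hcanc : ∀ a b c c' d d' : X,
      r (c, a) = (d, b) → r (c', a) = (d', b) → c = c' ∧ d = d') :
    (∀ x : X, ∃! y : X, r (x, y) = (x, y)) ∧
    Nat.card {p : X × X // r p = p} = n := by
  have key : ∀ x : X, ∃! y : X, r (x, y) = (x, y) := by
    intro x
    obtain ⟨y, hy⟩ := (hndl x).2 x
    simp only at hy
    set w := (r (x, y)).2 with hw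
    have hr : r (x, y) = (x, w) := Prod.ext hy rfl
    have h2 : r (x, w) = (x, y) := by rw [← hr]; exact hinv _
    have hwy : w = y := (hndl x).1 (show (r (x, w)).1 = (r (x, y)).1 by rw [h2, hr])
    refine ⟨y, by simpa [hwy] using hr, ?_⟩
    intro y' hy'
    exact (hndl x).1 (show (r (x, y')).1 = (r (x, y)).1 by rw [hy', hr])
  refine ⟨key, ?_⟩
  have g : {p : X × X // r p = p} → X := fun p => p.1.1
  have hg : Function.Bijective fun (p : {p : X × X // r p = p}) => p.1.1 := by
    constructor
    · rintro ⟨⟨a, b⟩, hab⟩ ⟨⟨c, d⟩, hcd⟩ h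
      simp only at h
      subst h
      obtain ⟨y, hy, huniq⟩ := key a
      have hb : b = y := huniq b hab
      have hd : d = y := huniq d hcd
      simp [hb, hd]
    · intro x
      obtain ⟨y, hy, -⟩ := key x
      exact ⟨⟨(x, y), hy⟩, rfl⟩
  rw [Nat.card_congr (Equiv.ofBijective _ hg), Nat.card_eq_fintype_card, hn]
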